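/- Let n ≥ 2 and N = 2^n − 1, and let ⊛ be the operation i ⊛ j := 2^(n−1)·(i + j) on ℤ/Nℤ. A map g : ℤ/Nℤ → ℤ/Nℤ is a bijection satisfying g(i ⊛ j) = g(i) ⊛ g(j) for all i, j if and only if there exist a unit m of the ring ℤ/Nℤ and an element k ∈ ℤ/Nℤ such that g(i) = m·i + k for all i. Consequently, the automorphism group of the idempotent quasigroup (ℤ/Nℤ, ⊛) is the affine group of ℤ/Nℤ, the semidirect product of (ℤ/Nℤ, +) by its unit group. -/

import Mathlib

def stmtAffEquiv {R : Type*} [CommRing R] (m : Rˣ) (k : R) : Equiv.Perm R where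
  toFun i := m * i + k
  invFun i := (m⁻¹ : Rˣ) * (i - k)
  left_inv i := by
    show (m⁻¹ : Rˣ) * ((m : R) * i + k - k) = i
    rw [add_sub_cancel_right, Units.inv_mul_cancel_left]
  right_inv i := by
    show (m : R) * ((m⁻¹ : Rˣ) * (i - k)) + k = i
    rw [Units.mul_inv_cancel_left, sub_add_cancel]

lemma stmt_two_mul (n : ℕ) (hn : 2 ≤ n) :
    (2 : ZMod (2 ^ n - 1)) * 2 ^ (n - 1) = 1 := by
  have h2 : (2 : ZMod (2 ^ n - 1)) ^ n = 1 := by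
    have h : ((2 ^ n : ℕ) : ZMod (2 ^ n - 1)) = ((2 ^ n - 1 : ℕ) : ZMod (2 ^ n - 1)) + 1 := by
      have h' : 2 ^ n - 1 + 1 = 2 ^ n := Nat.sub_add_cancel Nat.one_le_two_pow
      rw [← h']; push_cast; ring
    rw [ZMod.natCast_self] at h
    simpa using h
  calc (2 : ZMod (2 ^ n - 1)) * 2 ^ (n - 1) = 2 ^ (n - 1 + 1) := by rw [pow_succ]; ring
    _ = 1 := by rw [Nat.sub_add_cancel (le_trans one_le_two hn)]; exact h2

lemma stmt_fwd (n : ℕ) (hn : 2 ≤ n) (g : Equiv.Perm (ZMod (2 ^ n - 1)))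
    (hg : ∀ i j : ZMod (2 ^ n - 1), g (2 ^ (n - 1) * (i + j)) = 2 ^ (n - 1) * (g i + g j)) :
    ∃ m : (ZMod (2 ^ n - 1))ˣ, ∀ i, g i = (m : ZMod (2 ^ n - 1)) * i + g 0 := by
  haveI : NeZero (2 ^ n - 1) := ⟨by
    have : 2 ^ 2 ≤ 2 ^ n := Nat.pow_le_pow_right (by norm_num) hn
    omega⟩
  have hc := stmt_two_mul n hn
  set c : ZMod (2 ^ n - 1) := 2 ^ (n - 1) with hcdef
  set k : ZMod (2 ^ n - 1) := g 0 with hk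
  have h1 : ∀ i, g (c * i) = c * (g i + k) := fun i => by
    have := hg i 0; simpa using this
  have hadd : ∀ i j, g (i + j) + k = g i + g j := by
    intro i j
    have e1 := hg i j
    rw [h1 (i + j)] at e1
    have h2 := congrArg (fun x => (2 : ZMod (2 ^ n - 1)) * x) e1
    simp only [← mul_assoc, hc, one_mul] at h2
    exact h2
  -- f := g - k is additive
  set f : ZMod (2 ^ n - 1) → ZMod (2 ^ n - 1) := fun i => g i - k with hf
  have hfadd : ∀ i j, f (i + j) = f i + f j := by
    intro i j
    have := hadd i j
    simp only [hf]
    linear_combination this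
  set F : ZMod (2 ^ n - 1) →+ ZMod (2 ^ n - 1) := AddMonoidHom.mk' f hfadd with hF
  have hlin : ∀ x : ZMod (2 ^ n - 1), f x = x * f 1 := by
    intro x
    have h1' : (x.val : ZMod (2 ^ n - 1)) = x := ZMod.natCast_rightInverse x
    calc f x = F (x.val : ZMod (2 ^ n - 1)) := by rw [h1']; rfl
      _ = F (x.val • (1 : ZMod (2 ^ n - 1))) := by rw [nsmul_eq_mul, mul_one]
      _ = x.val • F 1 := AddMonoidHom.map_nsmul F x.val 1
      _ = (x.val : ZMod (2 ^ n - 1)) * F 1 := nsmul_eq_mul _ _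
      _ = x * f 1 := by rw [h1']; rfl
  -- f 1 is a unit
  obtain ⟨y, hy⟩ := g.surjective (1 + k)
  have hunit : IsUnit (f 1) := by
    apply IsUnit.of_mul_eq_one (a := f 1) y
    have := hlin y
    rw [hf] at this
    simp only [hy] at this
    rw [mul_comm]
    linear_combination -this
  refine ⟨hunit.unit, fun i => ?_⟩
  have := hlin i
  rw [IsUnit.unit_spec]
  simp only [hf] at this
  linear_combination this

theorem stmt_18 (n : ℕ) (hn : 2 ≤ n) :
    (∀ g : Equiv.Perm (ZMod (2 ^ n - 1)),
      (∀ i j : ZMod (2 ^ n - 1), g (2 ^ (n - 1) * (i + j)) = 2 ^ (n - 1) * (g i + g j)) ↔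
      ∃ (m : (ZMod (2 ^ n - 1))ˣ) (k : ZMod (2 ^ n - 1)),
        ∀ i : ZMod (2 ^ n - 1), g i = (m : ZMod (2 ^ n - 1)) * i + k) ∧
    ∃ e : {g : Equiv.Perm (ZMod (2 ^ n - 1)) //
            ∀ i j : ZMod (2 ^ n - 1), g (2 ^ (n - 1) * (i + j)) = 2 ^ (n - 1) * (g i + g j)} ≃
          ((ZMod (2 ^ n - 1))ˣ × ZMod (2 ^ n - 1)),
      ∀ f g h : {g : Equiv.Perm (ZMod (2 ^ n - 1)) //
            ∀ i j : ZMod (2 ^ n - 1), g (2 ^ (n - 1) * (i + j)) = 2 ^ (n - 1) * (g i + g j)},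
        (∀ x, h.1 x = f.1 (g.1 x)) →
          (e h).1 = (e f).1 * (e g).1 ∧
          (e h).2 = ((e f).1 : ZMod (2 ^ n - 1)) * (e g).2 + (e f).2 := by
  have hc := stmt_two_mul n hn
  have bwd : ∀ (m : (ZMod (2 ^ n - 1))ˣ) (k : ZMod (2 ^ n - 1)) (i j : ZMod (2 ^ n - 1)),
      (m : ZMod (2 ^ n - 1)) * (2 ^ (n - 1) * (i + j)) + k =
        2 ^ (n - 1) * (((m : ZMod (2 ^ n - 1)) * i + k) + ((m : ZMod (2 ^ n - 1)) * j + k)) := by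
    intro m k i j
    linear_combination (-k) * hc
  constructor
  · intro g
    constructor
    · intro hg
      obtain ⟨m, hm⟩ := stmt_fwd n hn g hg
      exact ⟨m, g 0, hm⟩
    · rintro ⟨m, k, hmk⟩ i j
      rw [hmk, hmk, hmk]
      exact bwd m k i j
  · set S := {g : Equiv.Perm (ZMod (2 ^ n - 1)) //
      ∀ i j : ZMod (2 ^ n - 1), g (2 ^ (n - 1) * (i + j)) = 2 ^ (n - 1) * (g i + g j)} with hS
    set F : ((ZMod (2 ^ n - 1))ˣ × ZMod (2 ^ n - 1)) → S :=
      fun p => ⟨stmtAffEquiv p.1 p.2, fun i j => bwd p.1 p.2 i j⟩ with hFdef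
    have hFinj : Function.Injective F := by
      intro p q hpq
      have h0 := congrArg (fun s : S => s.1 0) hpq
      have h1 := congrArg (fun s : S => s.1 1) hpq
      simp only [hFdef, stmtAffEquiv, Equiv.coe_fn_mk, mul_zero, zero_add, mul_one] at h0 h1
      have hm : (p.1 : ZMod (2 ^ n - 1)) = q.1 := by
        have := h1; rw [h0] at this
        exact add_right_cancel this
      exact Prod.ext (Units.ext hm) h0
    have hFsurj : Function.Surjective F := by
      intro s
      obtain ⟨m, hm⟩ := stmt_fwd n hn s.1 s.2
      exact ⟨(m, s.1 0), Subtype.ext (Equiv.ext fun i => (hm i).symm)⟩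
    set E := Equiv.ofBijective F ⟨hFinj, hFsurj⟩ with hE
    refine ⟨E.symm, fun f g h hcomp => ?_⟩
    have hap : ∀ s : S, ∀ x, s.1 x = ((E.symm s).1 : ZMod (2 ^ n - 1)) * x + (E.symm s).2 := by
      intro s x
      conv_lhs => rw [← E.apply_symm_apply s]
      rfl
    have key : E ((E.symm f).1 * (E.symm g).1,
        ((E.symm f).1 : ZMod (2 ^ n - 1)) * (E.symm g).2 + (E.symm f).2) = h := by
      apply Subtype.ext; apply Equiv.ext; intro x
      show (((E.symm f).1 * (E.symm g).1 : (ZMod (2 ^ n - 1))ˣ) : ZMod (2 ^ n - 1)) * x +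
        (((E.symm f).1 : ZMod (2 ^ n - 1)) * (E.symm g).2 + (E.symm f).2) = h.1 x
      rw [hcomp x, hap f, hap g]
      push_cast
      ring
    have hfin : E.symm h = ((E.symm f).1 * (E.symm g).1,
        ((E.symm f).1 : ZMod (2 ^ n - 1)) * (E.symm g).2 + (E.symm f).2) := by
      rw [← key, E.symm_apply_apply]
    exact ⟨by rw [hfin], by rw [hfin]⟩
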